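/- Let σ ∈ (0,π) and g(z) = cz/((1+az)(1+bz)) for constants a, b, c > 0. Then there is a constant C depending only on σ such that |g(z)| ≤ C·c/(a+b) for all z in the sector Σ_σ = {z ∈ ℂ∖(-∞,0] : |arg z| < σ}. -/

import Mathlib

open scoped Real

noncomputable section

/-- The open sector `Σ_σ = {z ∈ ℂ ∖ (-∞,0] : |arg z| < σ}` around the positive real
axis. -/
def Sector (σ : ℝ) : Set ℂ := {z : ℂ | z ≠ 0 ∧ |Complex.arg z| < σ}

lemma sector_key (σ : ℝ) (hσπ : σ < Real.pi) (a : ℝ) (ha : 0 < a) (z : ℂ)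
    (hz : z ≠ 0) (harg : |Complex.arg z| < σ) :
    (1 + Real.cos σ) / 2 * (1 + (a * ‖z‖) ^ 2) ≤ ‖1 + (a : ℂ) * z‖ ^ 2 := by
  have ht : 0 < ‖z‖ := norm_pos_iff.mpr hz
  have hcosθ : Real.cos σ ≤ Real.cos (Complex.arg z) := by
    rw [← Real.cos_abs (Complex.arg z)]
    exact Real.cos_le_cos_of_nonneg_of_le_pi (abs_nonneg _) hσπ.le harg.le
  have habs : ‖z‖ ≠ 0 := norm_ne_zero_iff.mpr hz
  have hre : z.re = ‖z‖ * Real.cos (Complex.arg z) := by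
    rw [Complex.cos_arg hz]
    field_simp
  have hnormsq : ‖z‖ ^ 2 = z.re ^ 2 + z.im ^ 2 := by
    rw [Complex.sq_norm, Complex.normSq_apply]; ring
  have h1 : ‖1 + (a : ℂ) * z‖ ^ 2 = (1 + a * z.re) ^ 2 + (a * z.im) ^ 2 := by
    rw [Complex.sq_norm, Complex.normSq_apply]
    simp [Complex.add_re, Complex.add_im, Complex.mul_re, Complex.mul_im]
    ring
  have h2 : ‖1 + (a : ℂ) * z‖ ^ 2
      = 1 + 2 * a * (‖z‖ * Real.cos (Complex.arg z)) + (a * ‖z‖) ^ 2 := by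
    rw [h1, ← hre]; linear_combination -a ^ 2 * hnormsq
  have hcos1 : -1 ≤ Real.cos σ := Real.neg_one_le_cos σ
  have hcos2 : Real.cos σ ≤ 1 := Real.cos_le_one σ
  rw [h2]
  nlinarith [mul_nonneg (mul_nonneg ha.le ht.le)
      (sub_nonneg.mpr hcosθ),
    mul_nonneg (mul_nonneg ha.le ht.le) (by linarith : (0:ℝ) ≤ 1 + Real.cos σ),
    mul_nonneg (by linarith : (0:ℝ) ≤ 1 - Real.cos σ) (sq_nonneg (a * ‖z‖ - 1))]

/-- Let `σ ∈ (0,π)` and `g(z) = c z / ((1+az)(1+bz))` for constants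
`a, b, c > 0`. Then there is a constant `C` depending only on `σ` such that
`|g(z)| ≤ C · c / (a+b)` for all `z ∈ Σ_σ`, uniformly in `a, b, c`. -/
theorem sector_rational_bound (σ : ℝ) (hσ0 : 0 < σ) (hσπ : σ < Real.pi) :
    ∃ C : ℝ, 0 < C ∧ ∀ a b c : ℝ, 0 < a → 0 < b → 0 < c → ∀ z ∈ Sector σ,
      ‖((c : ℂ) * z) / ((1 + (a : ℂ) * z) * (1 + (b : ℂ) * z))‖ ≤ C * (c / (a + b)) := by
  set ε : ℝ := (1 + Real.cos σ) / 2 with hεdef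
  have hε : 0 < ε := by
    have h := Real.cos_lt_cos_of_nonneg_of_le_pi hσ0.le le_rfl hσπ
    rw [Real.cos_pi] at h
    rw [hεdef]; linarith
  refine ⟨Real.sqrt 2 / ε, by positivity, ?_⟩
  intro a b c ha hb hc z hzS
  obtain ⟨hz, harg⟩ := hzS
  have ht : 0 < ‖z‖ := norm_pos_iff.mpr hz
  have hA := sector_key σ hσπ a ha z hz harg
  have hB := sector_key σ hσπ b hb z hz harg
  rw [← hεdef] at hA hB
  have hApos : 0 < ‖1 + (a : ℂ) * z‖ := by
    nlinarith [norm_nonneg (1 + (a : ℂ) * z), sq_nonneg (a * ‖z‖)]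
  have hBpos : 0 < ‖1 + (b : ℂ) * z‖ := by
    nlinarith [norm_nonneg (1 + (b : ℂ) * z), sq_nonneg (b * ‖z‖)]
  set D : ℝ := ‖1 + (a : ℂ) * z‖ * ‖1 + (b : ℂ) * z‖ with hDdef
  have hDpos : 0 < D := mul_pos hApos hBpos
  have hprod : (ε * (1 + (a * ‖z‖) ^ 2)) * (ε * (1 + (b * ‖z‖) ^ 2)) ≤ D ^ 2 := by
    have h0 : ‖1 + (a : ℂ) * z‖ ^ 2 * ‖1 + (b : ℂ) * z‖ ^ 2 = D ^ 2 := by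
      rw [hDdef]; ring
    have h1 := mul_le_mul hA hB
      (mul_nonneg hε.le (by positivity)) (sq_nonneg _)
    linarith [h1, h0.ge, h0.le]
  have hDsq : ε ^ 2 * ((a + b) ^ 2 * ‖z‖ ^ 2) / 2 ≤ D ^ 2 := by
    nlinarith [hprod, sq_nonneg (a * ‖z‖ - b * ‖z‖), sq_nonneg ε,
      mul_nonneg (sq_nonneg ε) (sq_nonneg (1 - a * ‖z‖ * (b * ‖z‖))),
      mul_nonneg (sq_nonneg ε) (sq_nonneg (a * ‖z‖ - b * ‖z‖))]
  have hsqrt : ε * ((a + b) * ‖z‖) ≤ Real.sqrt 2 * D := by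
    have hs2 : Real.sqrt 2 ^ 2 = 2 := Real.sq_sqrt (by norm_num)
    have h2 : (ε * ((a + b) * ‖z‖)) ^ 2 ≤ (Real.sqrt 2 * D) ^ 2 := by
      nlinarith [hDsq, hs2]
    have h3 := Real.sqrt_le_sqrt h2
    rwa [Real.sqrt_sq (by positivity), Real.sqrt_sq (by positivity)] at h3
  have hnorm : ‖((c : ℂ) * z) / ((1 + (a : ℂ) * z) * (1 + (b : ℂ) * z))‖
      = c * ‖z‖ / D := by
    rw [norm_div, norm_mul, norm_mul, Complex.norm_real, Real.norm_eq_abs,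
      abs_of_pos hc]
  rw [hnorm, div_mul_div_comm,
    div_le_div_iff₀ hDpos (by positivity : (0:ℝ) < ε * (a + b))]
  nlinarith [mul_le_mul_of_nonneg_left hsqrt hc.le]
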